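/- Let g = g_{5,3,2(λ)} and let F = (α, β, γ, δ, σ) ∈ g*. Then: (1) if γ = δ = σ = 0 then Ω_F = {F}; (2) if γ = δ = 0, σ ≠ 0 then Ω_F = {(α, y, 0, 0, s) : y ∈ ℝ, σs > 0}; (3) if γ = 0, δ ≠ 0, σ = 0 then Ω_F = {(α, y, 0, t, 0) : y ∈ ℝ, δt > 0}; (4) if γ = 0, δ ≠ 0, σ ≠ 0 then Ω_F = {(α, y, 0, t, s) : y ∈ ℝ, δt > 0, s = σ(t/δ)^{λ}}; (5) if γ ≠ 0, δ = σ = 0 then Ω_F = {(x, y, z, 0, 0) : y ∈ ℝ, γz > 0, x = α + γ − z}; (6) if γ ≠ 0, δ = 0, σ ≠ 0 then Ω_F = {(x, y, z, 0, s) : y ∈ ℝ, γz > 0, x = α + γ − z, s = σ(z/γ)^{λ}}; (7) if γ ≠ 0, δ ≠ 0, σ = 0 then Ω_F = {(x, y, z, t, 0) : y ∈ ℝ, δt > 0, x = α + γ − z and x = α + (1 − t/δ)γ}; (8) if γ ≠ 0, δ ≠ 0, σ ≠ 0 then Ω_F = {(x, y, z, t, s) : y ∈ ℝ, δt > 0,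 x = α + γ − z, x = α + (1 − t/δ)γ, s = σ(t/δ)^{λ}}. -/

import Mathlib

/-- The Lie bracket of g_{5,3,2(λ)}: [X1,X2] = X3, [X2,X3] = X3, [X2,X4] = X4, [X2,X5] = λ·X5,
written in coordinates with respect to the basis (X₁, X₂, X₃, X₄, X₅) (all other
brackets of basis vectors vanish); it is the bilinear extension of the structure
constants above. -/
def bracketg532 (l : ℝ) (U V : Fin 5 → ℝ) : Fin 5 → ℝ :=
  ![0, 0,
    (U 0 * V 1 - U 1 * V 0) + (U 1 * V 2 - U 2 * V 1),
    U 1 * V 3 - U 3 * V 1,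
    l * (U 1 * V 4 - U 4 * V 1)]

/-- The matrix of the adjoint endomorphism ad_U = [U, ·] in the basis (X₁, ..., X₅):
column j holds the coordinates of [U, Xⱼ]. -/
def adg532 (l : ℝ) (U : Fin 5 → ℝ) : Matrix (Fin 5) (Fin 5) ℝ :=
  Matrix.of fun i j => bracketg532 l U (Pi.single j 1) i

/-- The orbit Ω_F = { F ∘ exp(ad_U) : U ∈ g } in coordinates with respect to the dual
basis: a functional F' is identified with the vector (F'(X₁), ..., F'(X₅)), so that
F ∘ exp(ad_U) corresponds to the row-vector–matrix product vecMul F (exp (ad_U)). -/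
noncomputable def orbitg532 (l : ℝ) (F : Fin 5 → ℝ) : Set (Fin 5 → ℝ) :=
  Set.range fun U : Fin 5 → ℝ => Matrix.vecMul F (NormedSpace.exp (adg532 l U))

open Nat

def dvg (l : ℝ) (U : Fin 5 → ℝ) : Fin 5 → ℝ := ![0, 0, U 1, U 1, l * U 1]

lemma adg_eq (l : ℝ) (U : Fin 5 → ℝ) : adg532 l U = Matrix.of
    ![![0,0,0,0,0], ![0,0,0,0,0], ![-U 1, U 0 - U 2, U 1, 0, 0],
      ![0, -U 3, 0, U 1, 0], ![0, -(l * U 4), 0, 0, l * U 1]] := by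
  ext i j
  fin_cases i <;> fin_cases j <;>
    simp [adg532, bracketg532, Pi.single_apply, Matrix.vecHead, Matrix.vecTail] <;> ring_nf

lemma sq_eq (l : ℝ) (U : Fin 5 → ℝ) (i j : Fin 5) :
    (adg532 l U * adg532 l U) i j = dvg l U i * adg532 l U i j := by
  rw [adg_eq]
  fin_cases i <;> fin_cases j <;>
    simp [Matrix.mul_apply, Fin.sum_univ_five, dvg] <;> ring

lemma adg_pow_apply (l : ℝ) (U : Fin 5 → ℝ) (n : ℕ) (i j : Fin 5) :
    (adg532 l U ^ (n + 1)) i j = dvg l U i ^ n * adg532 l U i j := by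
  induction n generalizing j with
  | zero => simp
  | succ n ih =>
    rw [pow_succ, Matrix.mul_apply]
    simp only [ih, mul_assoc, ← Finset.mul_sum]
    rw [← Matrix.mul_apply, sq_eq]
    ring

noncomputable def fRg (d : ℝ) : ℝ := if d = 0 then 1 else (Real.exp d - 1) / d

lemma fRg_hasSum (d : ℝ) : HasSum (fun n : ℕ => d ^ n / (n + 1) !) (fRg d) := by
  rcases eq_or_ne d 0 with h | h
  · subst h
    have he : (fun n : ℕ => (0 : ℝ) ^ n / (n + 1) !) =
        fun n => if n = 0 then (1 : ℝ) else 0 := by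
      funext n; cases n <;> simp
    rw [fRg, if_pos rfl, he]
    exact hasSum_ite_eq 0 1
  · have h1 : HasSum (fun n : ℕ => d ^ n / n !) (Real.exp d) := by
      rw [Real.exp_eq_exp_ℝ]; exact NormedSpace.expSeries_div_hasSum_exp d
    have h2 : HasSum (fun n : ℕ => d ^ (n + 1) / (n + 1) !) (Real.exp d - 1) := by
      apply (hasSum_nat_add_iff (f := fun n : ℕ => d ^ n / n !) 1).mpr
      simpa using h1
    have h3 := h2.div_const d
    have he : (fun n : ℕ => d ^ (n + 1) / (n + 1) ! / d) =
        fun n : ℕ => d ^ n / (n + 1) ! := by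
      funext n; rw [pow_succ]; field_simp
    rw [fRg, if_neg h]
    rwa [he] at h3

lemma fRg_pos (d : ℝ) : 0 < fRg d := by
  rcases lt_trichotomy d 0 with h | h | h
  · rw [fRg, if_neg h.ne]
    apply div_pos_of_neg_of_neg _ h
    simpa using Real.exp_lt_one_iff.mpr h
  · simp [fRg, h]
  · rw [fRg, if_neg h.ne']
    apply div_pos _ h
    simpa using Real.one_lt_exp_iff.mpr h

lemma fRg_mul (d : ℝ) : d * fRg d = Real.exp d - 1 := by
  rcases eq_or_ne d 0 with h | h
  · simp [h]
  · rw [fRg, if_neg h]; field_simp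

noncomputable def Eg (l : ℝ) (U : Fin 5 → ℝ) : Matrix (Fin 5) (Fin 5) ℝ :=
  Matrix.of fun i j => (if i = j then (1:ℝ) else 0) + fRg (dvg l U i) * adg532 l U i j

lemma exp_adg (l : ℝ) (U : Fin 5 → ℝ) :
    NormedSpace.exp (adg532 l U) = Eg l U := by
  rw [NormedSpace.exp_eq_tsum ℝ]
  refine HasSum.tsum_eq ?_
  have key : ∀ i j : Fin 5, HasSum
      (fun n : ℕ => ((n ! : ℝ))⁻¹ * (adg532 l U ^ n) i j) (Eg l U i j) := by
    intro i j
    have hsh : HasSum (fun n : ℕ => (((n + 1) ! : ℝ))⁻¹ * (adg532 l U ^ (n + 1)) i j)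
        (fRg (dvg l U i) * adg532 l U i j) := by
      have heq : (fun n : ℕ => (((n + 1) ! : ℝ))⁻¹ * (adg532 l U ^ (n + 1)) i j) =
          fun n : ℕ => dvg l U i ^ n / (n + 1) ! * adg532 l U i j := by
        funext n; rw [adg_pow_apply, div_mul_eq_mul_div, div_eq_mul_inv]; ring
      rw [heq]
      exact (fRg_hasSum _).mul_right _
    have := (hasSum_nat_add_iff
      (f := fun n : ℕ => ((n ! : ℝ))⁻¹ * (adg532 l U ^ n) i j) 1).mp hsh
    simpa [Eg, Matrix.one_apply, add_comm] using this
  exact Pi.hasSum.mpr fun i => Pi.hasSum.mpr fun j => by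
    simpa [Matrix.smul_apply, smul_eq_mul] using key i j

lemma vecMul_Eg (l α β γ δ σ : ℝ) (U : Fin 5 → ℝ) :
    Matrix.vecMul ![α, β, γ, δ, σ] (Eg l U) =
      ![α + γ - γ * Real.exp (U 1),
        β + (γ * (U 0 - U 2) - δ * U 3) * fRg (U 1) - σ * l * U 4 * fRg (l * U 1),
        γ * Real.exp (U 1), δ * Real.exp (U 1), σ * Real.exp (l * U 1)] := by
  funext j
  fin_cases j <;>
    simp [Eg, Matrix.vecMul, dotProduct, Fin.sum_univ_five, dvg, adg_eq,
      Matrix.vecHead, Matrix.vecTail]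
  · linear_combination (-γ) * fRg_mul (U 1)
  · ring
  · left; linear_combination fRg_mul (U 1)
  · left; linear_combination fRg_mul (U 1)
  · left; linear_combination fRg_mul (l * U 1)

lemma orbit_eq (l α β γ δ σ : ℝ) :
    orbitg532 l ![α, β, γ, δ, σ] =
      {p | ∃ a b c d e : ℝ,
        p = ![α + γ - γ * Real.exp b,
              β + (γ * (a - c) - δ * d) * fRg b - σ * l * e * fRg (l * b),
              γ * Real.exp b, δ * Real.exp b, σ * Real.exp (l * b)]} := by
  ext p
  constructor
  · rintro ⟨U, rfl⟩
    exact ⟨U 0, U 1, U 2, U 3, U 4, by simp only [exp_adg, vecMul_Eg]⟩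
  · rintro ⟨a, b, c, d, e, rfl⟩
    refine ⟨![a, b, c, d, e], ?_⟩
    simp only [exp_adg, vecMul_Eg]
    simp

lemma div_pos_of_mul_pos' {a b : ℝ} (h : 0 < a * b) : 0 < b / a := by
  rcases mul_pos_iff.mp h with ⟨ha, hb⟩ | ⟨ha, hb⟩
  · exact div_pos hb ha
  · exact div_pos_of_neg_of_neg hb ha

lemma exp_l_log {x l : ℝ} (h : 0 < x) : Real.exp (l * Real.log x) = x ^ l := by
  rw [Real.rpow_def_of_pos h, mul_comm]

lemma rpow_exp' (b l : ℝ) : Real.exp b ^ l = Real.exp (l * b) := by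
  rw [Real.rpow_def_of_pos (Real.exp_pos b), Real.log_exp, mul_comm]


theorem kOrbits_g532 (l α β γ δ σ : ℝ) (hl0 : l ≠ 0) (hl1 : l ≠ 1) :
    (γ = 0 → δ = 0 → σ = 0 → orbitg532 l ![α, β, γ, δ, σ] = {![α, β, γ, δ, σ]}) ∧
    (γ = 0 → δ = 0 → σ ≠ 0 → orbitg532 l ![α, β, γ, δ, σ] = {p | ∃ y s : ℝ, σ * s > 0 ∧ p = ![α, y, 0, 0, s]}) ∧
    (γ = 0 → δ ≠ 0 → σ = 0 → orbitg532 l ![α, β, γ, δ, σ] = {p | ∃ y t : ℝ, δ * t > 0 ∧ p = ![α, y, 0, t, 0]}) ∧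
    (γ = 0 → δ ≠ 0 → σ ≠ 0 → orbitg532 l ![α, β, γ, δ, σ] = {p | ∃ y t s : ℝ, δ * t > 0 ∧ s = σ * (t / δ) ^ l ∧ p = ![α, y, 0, t, s]}) ∧
    (γ ≠ 0 → δ = 0 → σ = 0 → orbitg532 l ![α, β, γ, δ, σ] = {p | ∃ x y z : ℝ, γ * z > 0 ∧ x = α + γ - z ∧ p = ![x, y, z, 0, 0]}) ∧
    (γ ≠ 0 → δ = 0 → σ ≠ 0 → orbitg532 l ![α, β, γ, δ, σ] = {p | ∃ x y z s : ℝ, γ * z > 0 ∧ x = α + γ - z ∧ s = σ * (z / γ) ^ l ∧ p = ![x, y, z, 0, s]}) ∧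
    (γ ≠ 0 → δ ≠ 0 → σ = 0 → orbitg532 l ![α, β, γ, δ, σ] = {p | ∃ x y z t : ℝ, δ * t > 0 ∧ x = α + γ - z ∧ x = α + (1 - t / δ) * γ ∧ p = ![x, y, z, t, 0]}) ∧
    (γ ≠ 0 → δ ≠ 0 → σ ≠ 0 → orbitg532 l ![α, β, γ, δ, σ] = {p | ∃ x y z t s : ℝ, δ * t > 0 ∧ x = α + γ - z ∧ x = α + (1 - t / δ) * γ ∧ s = σ * (t / δ) ^ l ∧ p = ![x, y, z, t, s]}) := by
  refine ⟨?c1, ?c2, ?c3, ?c4, ?c5, ?c6, ?c7, ?c8⟩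
  case c1 =>
    intro hγ hδ hσ; subst hγ; subst hδ; subst hσ
    rw [orbit_eq]; ext p
    simp only [Set.mem_setOf_eq, Set.mem_singleton_iff]
    constructor
    · rintro ⟨a, b, c, d, e, rfl⟩
      funext i; fin_cases i <;> simp
    · rintro rfl
      exact ⟨0, 0, 0, 0, 0, by funext i; fin_cases i <;> simp⟩
  case c2 =>
    intro hγ hδ hσ; subst hγ; subst hδ
    rw [orbit_eq]; ext p
    simp only [Set.mem_setOf_eq]
    constructor
    · rintro ⟨a, b, c, d, e, rfl⟩
      refine ⟨β + (0 * (a - c) - 0 * d) * fRg b - σ * l * e * fRg (l * b),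
        σ * Real.exp (l * b), ?_, ?_⟩
      · have h1 := Real.exp_pos (l * b)
        have h2 : (0:ℝ) < σ ^ 2 := by positivity
        nlinarith
      · funext i; fin_cases i <;> simp
    · rintro ⟨y, s, hs, rfl⟩
      have h1 : 0 < s / σ := div_pos_of_mul_pos' hs
      have hlb : l * (Real.log (s / σ) / l) = Real.log (s / σ) := by field_simp
      have hf : fRg (Real.log (s / σ)) ≠ 0 := (fRg_pos _).ne'
      refine ⟨0, Real.log (s / σ) / l, 0, 0,
        (β - y) / (σ * l * fRg (l * (Real.log (s / σ) / l))), ?_⟩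
      funext i; fin_cases i <;> simp [hlb, Real.exp_log h1]
      · field_simp
        ring
      · field_simp
  case c3 =>
    intro hγ hδ hσ; subst hγ; subst hσ
    rw [orbit_eq]; ext p
    simp only [Set.mem_setOf_eq]
    constructor
    · rintro ⟨a, b, c, d, e, rfl⟩
      refine ⟨β + (0 * (a - c) - δ * d) * fRg b - 0 * l * e * fRg (l * b),
        δ * Real.exp b, ?_, ?_⟩
      · have h1 := Real.exp_pos b
        have h2 : (0:ℝ) < δ ^ 2 := by positivity
        nlinarith
      · funext i; fin_cases i <;> simp
    · rintro ⟨y, t, ht, rfl⟩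
      have h1 : 0 < t / δ := div_pos_of_mul_pos' ht
      have hf : fRg (Real.log (t / δ)) ≠ 0 := (fRg_pos _).ne'
      refine ⟨0, Real.log (t / δ), 0, (β - y) / (δ * fRg (Real.log (t / δ))), 0, ?_⟩
      funext i; fin_cases i <;> simp [Real.exp_log h1]
      · field_simp
        ring
      · field_simp
  case c4 =>
    intro hγ hδ hσ; subst hγ
    rw [orbit_eq]; ext p
    simp only [Set.mem_setOf_eq]
    constructor
    · rintro ⟨a, b, c, d, e, rfl⟩
      refine ⟨β + (0 * (a - c) - δ * d) * fRg b - σ * l * e * fRg (l * b),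
        δ * Real.exp b, σ * Real.exp (l * b), ?_, ?_, ?_⟩
      · have h1 := Real.exp_pos b
        have h2 : (0:ℝ) < δ ^ 2 := by positivity
        nlinarith
      · rw [mul_div_cancel_left₀ _ hδ, rpow_exp']
      · funext i; fin_cases i <;> simp
    · rintro ⟨y, t, s, ht, hs, rfl⟩
      have h1 : 0 < t / δ := div_pos_of_mul_pos' ht
      have hf : fRg (Real.log (t / δ)) ≠ 0 := (fRg_pos _).ne'
      refine ⟨0, Real.log (t / δ), 0, (β - y) / (δ * fRg (Real.log (t / δ))), 0, ?_⟩
      funext i; fin_cases i <;> simp [Real.exp_log h1, exp_l_log h1]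
      · field_simp
        ring
      · field_simp
      · exact hs
  case c5 =>
    intro hγ hδ hσ; subst hδ; subst hσ
    rw [orbit_eq]; ext p
    simp only [Set.mem_setOf_eq]
    constructor
    · rintro ⟨a, b, c, d, e, rfl⟩
      refine ⟨α + γ - γ * Real.exp b,
        β + (γ * (a - c) - 0 * d) * fRg b - 0 * l * e * fRg (l * b),
        γ * Real.exp b, ?_, ?_, ?_⟩
      · have h1 := Real.exp_pos b
        have h2 : (0:ℝ) < γ ^ 2 := by positivity
        nlinarith
      · ring
      · funext i; fin_cases i <;> simp
    · rintro ⟨x, y, z, hz, hx, rfl⟩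
      have h1 : 0 < z / γ := div_pos_of_mul_pos' hz
      have hf : fRg (Real.log (z / γ)) ≠ 0 := (fRg_pos _).ne'
      refine ⟨(y - β) / (γ * fRg (Real.log (z / γ))), Real.log (z / γ), 0, 0, 0, ?_⟩
      funext i; fin_cases i <;> simp [Real.exp_log h1]
      · rw [mul_div_cancel₀ _ hγ]; linarith
      · field_simp
        ring
      · rw [mul_div_cancel₀ _ hγ]
  case c6 =>
    intro hγ hδ hσ; subst hδ
    rw [orbit_eq]; ext p
    simp only [Set.mem_setOf_eq]
    constructor
    · rintro ⟨a, b, c, d, e, rfl⟩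
      refine ⟨α + γ - γ * Real.exp b,
        β + (γ * (a - c) - 0 * d) * fRg b - σ * l * e * fRg (l * b),
        γ * Real.exp b, σ * Real.exp (l * b), ?_, ?_, ?_, ?_⟩
      · have h1 := Real.exp_pos b
        have h2 : (0:ℝ) < γ ^ 2 := by positivity
        nlinarith
      · ring
      · rw [mul_div_cancel_left₀ _ hγ, rpow_exp']
      · funext i; fin_cases i <;> simp
    · rintro ⟨x, y, z, s, hz, hx, hs, rfl⟩
      have h1 : 0 < z / γ := div_pos_of_mul_pos' hz
      have hf : fRg (Real.log (z / γ)) ≠ 0 := (fRg_pos _).ne'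
      refine ⟨(y - β) / (γ * fRg (Real.log (z / γ))), Real.log (z / γ), 0, 0, 0, ?_⟩
      funext i; fin_cases i <;> simp [Real.exp_log h1, exp_l_log h1]
      · rw [mul_div_cancel₀ _ hγ]; linarith
      · field_simp
        ring
      · rw [mul_div_cancel₀ _ hγ]
      · exact hs
  case c7 =>
    intro hγ hδ hσ; subst hσ
    rw [orbit_eq]; ext p
    simp only [Set.mem_setOf_eq]
    constructor
    · rintro ⟨a, b, c, d, e, rfl⟩
      refine ⟨α + γ - γ * Real.exp b,
        β + (γ * (a - c) - δ * d) * fRg b - 0 * l * e * fRg (l * b),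
        γ * Real.exp b, δ * Real.exp b, ?_, ?_, ?_, ?_⟩
      · have h1 := Real.exp_pos b
        have h2 : (0:ℝ) < δ ^ 2 := by positivity
        nlinarith
      · ring
      · rw [mul_div_cancel_left₀ _ hδ]; ring
      · funext i; fin_cases i <;> simp
    · rintro ⟨x, y, z, t, ht, hx1, hx2, rfl⟩
      have h1 : 0 < t / δ := div_pos_of_mul_pos' ht
      have hf : fRg (Real.log (t / δ)) ≠ 0 := (fRg_pos _).ne'
      refine ⟨(y - β) / (γ * fRg (Real.log (t / δ))), Real.log (t / δ), 0, 0, 0, ?_⟩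
      funext i; fin_cases i <;> simp [Real.exp_log h1]
      · linear_combination hx2
      · field_simp
        ring
      · linear_combination hx1 - hx2
      · field_simp
  case c8 =>
    intro hγ hδ hσ
    rw [orbit_eq]; ext p
    simp only [Set.mem_setOf_eq]
    constructor
    · rintro ⟨a, b, c, d, e, rfl⟩
      refine ⟨α + γ - γ * Real.exp b,
        β + (γ * (a - c) - δ * d) * fRg b - σ * l * e * fRg (l * b),
        γ * Real.exp b, δ * Real.exp b, σ * Real.exp (l * b), ?_, ?_, ?_, ?_, ?_⟩
      · have h1 := Real.exp_pos b
        have h2 : (0:ℝ) < δ ^ 2 := by positivity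
        nlinarith
      · ring
      · rw [mul_div_cancel_left₀ _ hδ]; ring
      · rw [mul_div_cancel_left₀ _ hδ, rpow_exp']
      · funext i; fin_cases i <;> simp
    · rintro ⟨x, y, z, t, s, ht, hx1, hx2, hs, rfl⟩
      have h1 : 0 < t / δ := div_pos_of_mul_pos' ht
      have hf : fRg (Real.log (t / δ)) ≠ 0 := (fRg_pos _).ne'
      refine ⟨(y - β) / (γ * fRg (Real.log (t / δ))), Real.log (t / δ), 0, 0, 0, ?_⟩
      funext i; fin_cases i <;> simp [Real.exp_log h1, exp_l_log h1]
      · linear_combination hx2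
      · field_simp
        ring
      · linear_combination hx1 - hx2
      · field_simp
      · exact hs
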